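/- Let X be a nonempty finite type and p : ℝ → X → ℝ a parametrized family of probability mass functions (p(θ, x) > 0, ∑_{x∈X} p(θ, x) = 1, and θ ↦ p(θ, x) differentiable for each x). Let g : X → ℝ and let 1 ≤ k < n. Define maxg@k(θ) = ∑_{y : Fin k → X} (∏_{i} p(θ, yᵢ)) · max_{1≤i≤k} g(yᵢ). For a tuple x : Fin n → X, define S(j, k, A; x) = (1/C(|A|, k)) · ∑_{I ⊆ A, |I| = k, j ∈ I} max_{b∈I} g(x_b) for A ⊆ {1,...,n}, and define the leave-one-out baselined reward s_i^{loo}(x) = S(i, k, {1,...,n}; x) − (1/(n−1)) · ∑_{j ≠ i} S(j, k, {1,...,n}∖{i}; x). Then for every θ: ∑_{x : Fin n → X} (∏_{i} p(θ, xᵢ)) · ∑_{i=1}^{n} s_i^{loo}(x) · (d/dθ p(θ, xᵢ))/p(θ, xᵢ) = d/dθ maxg@k(θ). -/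

import Mathlib

/-- The maximum of `g` over a finite index set `I` (equal to `max_{i ∈ I} g i`
whenever `I` is nonempty). -/
noncomputable def finsetMax {α : Type*} (I : Finset α) (g : α → ℝ) : ℝ :=
  WithBot.unbotD 0 (I.sup fun a => ((g a : ℝ) : WithBot ℝ))

/-- S(j, k, A; x) = (1/C(|A|, k)) · ∑_{I ⊆ A, |I| = k, j ∈ I} max_{b∈I} g(x_b). -/
noncomputable def Sfun {X : Type*} (g : X → ℝ) {n : ℕ} (x : Fin n → X)
    (j : Fin n) (k : ℕ) (A : Finset (Fin n)) : ℝ :=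
  (1 / (A.card.choose k : ℝ)) *
    ∑ I ∈ (Finset.powersetCard k A).filter (fun I => j ∈ I),
      finsetMax I (fun b => g (x b))

lemma finsetMax_congr {α : Type*} {I : Finset α} {f f' : α → ℝ}
    (h : ∀ b ∈ I, f b = f' b) : finsetMax I f = finsetMax I f' := by
  unfold finsetMax
  rw [Finset.sup_congr rfl (fun b hb => by rw [h b hb])]

lemma Sfun_congr {X : Type*} (g : X → ℝ) {n : ℕ} {x y : Fin n → X}
    (j : Fin n) (k : ℕ) (A : Finset (Fin n)) (hxy : ∀ b ∈ A, x b = y b) :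
    Sfun g x j k A = Sfun g y j k A := by
  unfold Sfun
  congr 1
  refine Finset.sum_congr rfl fun I hI => ?_
  have hIA : I ⊆ A := (Finset.mem_powersetCard.1 (Finset.mem_filter.1 hI).1).1
  exact finsetMax_congr fun b hb => congrArg g (hxy b (hIA hb))

lemma sum_deriv_zero {X : Type*} [Fintype X] (p : ℝ → X → ℝ)
    (hsum : ∀ θ, ∑ x, p θ x = 1)
    (hdiff : ∀ x, Differentiable ℝ fun θ => p θ x) (θ : ℝ) :
    ∑ a, deriv (fun t => p t a) θ = 0 := by
  have h := deriv_fun_sum (u := Finset.univ) (A := fun a t => p t a) (x := θ)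
    (fun a _ => (hdiff a).differentiableAt)
  rw [← h]
  have h1 : (fun y : ℝ => ∑ a, p y a) = fun _ => (1 : ℝ) := funext hsum
  rw [h1]
  simp

lemma vanish {X : Type*} [Fintype X] [Nonempty X] {n : ℕ} (p : ℝ → X → ℝ)
    (hpos : ∀ θ x, 0 < p θ x) (hsum : ∀ θ, ∑ x, p θ x = 1)
    (hdiff : ∀ x, Differentiable ℝ fun θ => p θ x) (θ : ℝ) (i : Fin n)
    (h : (Fin n → X) → ℝ)
    (hh : ∀ x y : Fin n → X, (∀ j, j ≠ i → x j = y j) → h x = h y) :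
    ∑ x : Fin n → X, (∏ j, p θ (x j)) * h x *
      (deriv (fun t => p t (x i)) θ / p θ (x i)) = 0 := by
  have hterm : ∀ x : Fin n → X,
      (∏ j, p θ (x j)) * h x * (deriv (fun t => p t (x i)) θ / p θ (x i))
        = (∏ j ∈ Finset.univ.erase i, p θ (x j)) * h x *
            deriv (fun t => p t (x i)) θ := by
    intro x
    rw [← Finset.mul_prod_erase Finset.univ _ (Finset.mem_univ i)]
    have hp : p θ (x i) ≠ 0 := (hpos θ (x i)).ne'
    field_simp
  rw [Finset.sum_congr rfl fun x _ => hterm x]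
  set e := Equiv.piSplitAt i (fun _ : Fin n => X) with he
  rw [← Equiv.sum_comp e.symm, Fintype.sum_prod_type]
  have happ : ∀ (a : X) (v : {j : Fin n // j ≠ i} → X) (j : Fin n) (hj : j ≠ i),
      e.symm (a, v) j = v ⟨j, hj⟩ := by
    intro a v j hj
    simp [he, Equiv.piSplitAt, hj]
  have happi : ∀ (a : X) (v : {j : Fin n // j ≠ i} → X), e.symm (a, v) i = a := by
    intro a v
    simp [he, Equiv.piSplitAt]
  obtain ⟨a₀⟩ := ‹Nonempty X›
  have key : ∀ (a : X) (v : {j : Fin n // j ≠ i} → X),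
      (∏ j ∈ Finset.univ.erase i, p θ (e.symm (a, v) j)) * h (e.symm (a, v)) *
        deriv (fun t => p t (e.symm (a, v) i)) θ
      = ((∏ j ∈ Finset.univ.erase i, p θ (e.symm (a₀, v) j)) * h (e.symm (a₀, v)))
          * deriv (fun t => p t a) θ := by
    intro a v
    have h1 : (∏ j ∈ Finset.univ.erase i, p θ (e.symm (a, v) j))
        = ∏ j ∈ Finset.univ.erase i, p θ (e.symm (a₀, v) j) := by
      refine Finset.prod_congr rfl fun j hj => ?_
      have hj' : j ≠ i := (Finset.mem_erase.1 hj).1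
      rw [happ a v j hj', happ a₀ v j hj']
    have h2 : h (e.symm (a, v)) = h (e.symm (a₀, v)) := by
      refine hh _ _ fun j hj => ?_
      rw [happ a v j hj, happ a₀ v j hj]
    rw [h1, h2, happi a v]
  rw [Finset.sum_congr rfl fun a _ => Finset.sum_congr rfl fun v _ => key a v]
  rw [Finset.sum_comm]
  simp_rw [← Finset.mul_sum]
  rw [sum_deriv_zero p hsum hdiff θ]
  simp

lemma marg {X : Type*} [Fintype X] (p' : X → ℝ) (hsum : ∑ a, p' a = 1)
    (g : X → ℝ) {n k : ℕ} (I : Finset (Fin n)) (hI : I.card = k) :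
    ∑ x : Fin n → X, (∏ j, p' (x j)) * finsetMax I (fun b => g (x b))
      = ∑ y : Fin k → X, (∏ i, p' (y i)) *
          finsetMax (Finset.univ : Finset (Fin k)) (fun i => g (y i)) := by
  classical
  set e := Equiv.piEquivPiSubtypeProd (fun j : Fin n => j ∈ I) (fun _ => X) with he
  rw [← Equiv.sum_comp e.symm, Fintype.sum_prod_type]
  have happ_pos : ∀ (u : {j : Fin n // j ∈ I} → X) (v : {j : Fin n // ¬ j ∈ I} → X)
      (j : Fin n) (hj : j ∈ I), e.symm (u, v) j = u ⟨j, hj⟩ := by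
    intro u v j hj
    simp [he, Equiv.piEquivPiSubtypeProd, hj]
  have happ_neg : ∀ (u : {j : Fin n // j ∈ I} → X) (v : {j : Fin n // ¬ j ∈ I} → X)
      (j : Fin n) (hj : ¬ j ∈ I), e.symm (u, v) j = v ⟨j, hj⟩ := by
    intro u v j hj
    simp [he, Equiv.piEquivPiSubtypeProd, hj]
  have key : ∀ (u : {j : Fin n // j ∈ I} → X) (v : {j : Fin n // ¬ j ∈ I} → X),
      (∏ j, p' (e.symm (u, v) j)) * finsetMax I (fun b => g (e.symm (u, v) b))
      = ((∏ j : {j : Fin n // j ∈ I}, p' (u j)) *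
          finsetMax (Finset.univ : Finset {j : Fin n // j ∈ I}) (fun b => g (u b)))
        * (∏ j : {j : Fin n // ¬ j ∈ I}, p' (v j)) := by
    intro u v
    have hprod : (∏ j, p' (e.symm (u, v) j))
        = (∏ j : {j : Fin n // j ∈ I}, p' (u j)) *
          (∏ j : {j : Fin n // ¬ j ∈ I}, p' (v j)) := by
      rw [← Finset.prod_mul_prod_compl I (fun j => p' (e.symm (u, v) j))]
      congr 1
      · exact (Finset.prod_subtype I (fun _ => Iff.rfl)
            (fun j => p' (e.symm (u, v) j))).trans
          (Finset.prod_congr rfl fun j _ =>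
            congrArg p' (happ_pos u v j.1 j.2))
      · exact (Finset.prod_subtype Iᶜ (fun _ => Finset.mem_compl)
            (fun j => p' (e.symm (u, v) j))).trans
          (Finset.prod_congr rfl fun j _ =>
            congrArg p' (happ_neg u v j.1 j.2))
    have hmax : finsetMax I (fun b => g (e.symm (u, v) b))
        = finsetMax (Finset.univ : Finset {j : Fin n // j ∈ I}) (fun b => g (u b)) := by
      unfold finsetMax
      congr 1
      rw [Finset.univ_eq_attach, ← Finset.sup_attach]
      exact Finset.sup_congr rfl fun b _ =>
        congrArg (fun z => ((g z : ℝ) : WithBot ℝ)) (happ_pos u v b.1 b.2)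
    rw [hprod, hmax]
    ring
  rw [Finset.sum_congr rfl fun u _ => Finset.sum_congr rfl fun v _ => key u v]
  simp_rw [← Finset.mul_sum]
  have hone : (∑ v : {j : Fin n // ¬ j ∈ I} → X,
      ∏ j : {j : Fin n // ¬ j ∈ I}, p' (v j)) = 1 := by
    rw [← Fintype.prod_sum (fun (_ : {j : Fin n // ¬ j ∈ I}) (a : X) => p' a)]
    simp [hsum]
  simp_rw [hone, mul_one]
  have hcard : Fintype.card {j : Fin n // j ∈ I} = k := by
    simpa using hI
  set q : {j : Fin n // j ∈ I} ≃ Fin k := Fintype.equivFinOfCardEq hcard with hq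
  set E : (Fin k → X) ≃ ({j : Fin n // j ∈ I} → X) :=
    Equiv.arrowCongr q.symm (Equiv.refl X) with hE
  rw [← Equiv.sum_comp E]
  refine Finset.sum_congr rfl fun y _ => ?_
  have hEy : ∀ j : {j : Fin n // j ∈ I}, E y j = y (q j) := fun j => rfl
  have h1 : (∏ j : {j : Fin n // j ∈ I}, p' (E y j)) = ∏ i : Fin k, p' (y i) :=
    Fintype.prod_equiv q _ _ fun j => by rw [hEy]
  have h2 : finsetMax (Finset.univ : Finset {j : Fin n // j ∈ I}) (fun b => g (E y b))
      = finsetMax (Finset.univ : Finset (Fin k)) (fun i => g (y i)) := by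
    unfold finsetMax
    congr 1
    have : (Finset.univ : Finset {j : Fin n // j ∈ I}).sup
        (fun b => ((g (E y b) : ℝ) : WithBot ℝ))
        = (Finset.univ.image q).sup (fun i : Fin k => ((g (y i) : ℝ) : WithBot ℝ)) := by
      rw [Finset.sup_image]
      exact Finset.sup_congr rfl fun b _ =>
        congrArg (fun z => ((g z : ℝ) : WithBot ℝ)) (hEy b).symm
    rw [this, Finset.image_univ_equiv]
  rw [h1, h2]

/-- The leave-one-out baselined estimator ∑_i s_i^{loo}(x) ∇_θ log p(xᵢ|θ),
with s_i^{loo}(x) = S(i, k, {1,...,n}; x) − (1/(n−1)) ∑_{j≠i} S(j, k, {1,...,n}∖{i}; x),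
is an unbiased estimator of the gradient of
maxg@k(θ) = ∑_{y : Fin k → X} (∏ᵢ p(θ, yᵢ)) · max_{1≤i≤k} g(yᵢ), for 1 ≤ k < n. -/
theorem unbiased_loo_maxgk_gradient_estimator {X : Type*} [Fintype X] [Nonempty X]
    (p : ℝ → X → ℝ)
    (hpos : ∀ θ x, 0 < p θ x)
    (hsum : ∀ θ, ∑ x, p θ x = 1)
    (hdiff : ∀ x, Differentiable ℝ fun θ => p θ x)
    (g : X → ℝ)
    (n k : ℕ) (hk : 1 ≤ k) (hkn : k < n) (θ : ℝ) :
    ∑ x : Fin n → X, (∏ i, p θ (x i)) *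
        ∑ i, (Sfun g x i k Finset.univ -
              (1 / ((n : ℝ) - 1)) *
                ∑ j ∈ Finset.univ.erase i, Sfun g x j k (Finset.univ.erase i)) *
          (deriv (fun t => p t (x i)) θ / p θ (x i))
      = deriv (fun t => ∑ y : Fin k → X,
          (∏ i, p t (y i)) * finsetMax (Finset.univ : Finset (Fin k)) (fun i => g (y i))) θ := by
  classical
  set PS : Finset (Finset (Fin n)) := Finset.powersetCard k Finset.univ with hPS
  have hC : ((n.choose k : ℕ) : ℝ) ≠ 0 :=
    Nat.cast_ne_zero.2 (Nat.choose_pos hkn.le).ne'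
  have hcardPS : PS.card = n.choose k := by
    rw [hPS, Finset.card_powersetCard, Finset.card_univ, Fintype.card_fin]
  set T : Finset (Fin n) → Fin n → ℝ := fun I i =>
    ∑ x : Fin n → X, (∏ j, p θ (x j)) * finsetMax I (fun b => g (x b)) *
      (deriv (fun t => p t (x i)) θ / p θ (x i)) with hT
  have hT0 : ∀ I i, i ∉ I → T I i = 0 := by
    intro I i hi
    exact vanish p hpos hsum hdiff θ i _ (fun x y hxy =>
      finsetMax_congr fun b hb =>
        congrArg g (hxy b (fun hbi => hi (hbi ▸ hb))))
  -- RHS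
  have hRHS : deriv (fun t => ∑ y : Fin k → X,
      (∏ i, p t (y i)) * finsetMax (Finset.univ : Finset (Fin k)) (fun i => g (y i))) θ
      = (1 / (n.choose k : ℝ)) * ∑ I ∈ PS, ∑ i, T I i := by
    have hfun : (fun t => ∑ y : Fin k → X,
        (∏ i, p t (y i)) * finsetMax (Finset.univ : Finset (Fin k)) (fun i => g (y i)))
        = fun t => (1 / (n.choose k : ℝ)) * ∑ I ∈ PS, ∑ x : Fin n → X,
            (∏ j, p t (x j)) * finsetMax I (fun b => g (x b)) := by
      funext t
      have hm : ∀ I ∈ PS, (∑ x : Fin n → X,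
          (∏ j, p t (x j)) * finsetMax I (fun b => g (x b)))
          = ∑ y : Fin k → X, (∏ i, p t (y i)) *
              finsetMax (Finset.univ : Finset (Fin k)) (fun i => g (y i)) := by
        intro I hI
        exact marg (p t) (hsum t) g I
          (Finset.mem_powersetCard.1 (hPS ▸ hI)).2
      rw [Finset.sum_congr rfl hm, Finset.sum_const, nsmul_eq_mul, hcardPS,
        ← mul_assoc, one_div, inv_mul_cancel₀ hC, one_mul]
    rw [hfun]
    have hpd : ∀ (x : Fin n → X), HasDerivAt (fun t => ∏ j, p t (x j))
        ((∏ j, p θ (x j)) * ∑ i, deriv (fun t => p t (x i)) θ / p θ (x i)) θ := by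
      intro x
      have h1 := HasDerivAt.fun_finsetProd (u := Finset.univ) (f := fun j t => p t (x j))
        (f' := fun j => deriv (fun t => p t (x j)) θ) (x := θ)
        (fun j _ => ((hdiff (x j)).differentiableAt).hasDerivAt)
      convert h1 using 1
      case e'_4 => rfl
      case e'_5 => rfl
      rw [Finset.mul_sum]
      refine Finset.sum_congr rfl fun i _ => ?_
      rw [smul_eq_mul,
        ← Finset.mul_prod_erase Finset.univ (fun j => p θ (x j)) (Finset.mem_univ i)]
      have hp : p θ (x i) ≠ 0 := (hpos θ (x i)).ne'
      field_simp
    have H : HasDerivAt (fun t => (1 / (n.choose k : ℝ)) * ∑ I ∈ PS, ∑ x : Fin n → X,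
        (∏ j, p t (x j)) * finsetMax I (fun b => g (x b)))
        ((1 / (n.choose k : ℝ)) * ∑ I ∈ PS, ∑ x : Fin n → X,
          ((∏ j, p θ (x j)) * ∑ i, deriv (fun t => p t (x i)) θ / p θ (x i)) *
            finsetMax I (fun b => g (x b))) θ :=
      HasDerivAt.const_mul _ (HasDerivAt.fun_sum fun I _ =>
        HasDerivAt.fun_sum fun x _ => (hpd x).mul_const _)
    rw [H.deriv]
    congr 1
    refine Finset.sum_congr rfl fun I _ => ?_
    have hx : ∀ x : Fin n → X,
        ((∏ j, p θ (x j)) * ∑ i, deriv (fun t => p t (x i)) θ / p θ (x i)) *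
          finsetMax I (fun b => g (x b))
        = ∑ i, (∏ j, p θ (x j)) * finsetMax I (fun b => g (x b)) *
            (deriv (fun t => p t (x i)) θ / p θ (x i)) := by
      intro x
      rw [Finset.mul_sum, Finset.sum_mul]
      exact Finset.sum_congr rfl fun i _ => by ring
    rw [Finset.sum_congr rfl fun x _ => hx x, Finset.sum_comm]
  rw [hRHS]
  -- LHS
  have expand : ∀ x : Fin n → X, (∏ j, p θ (x j)) *
      (∑ i, (Sfun g x i k Finset.univ -
          (1 / ((n : ℝ) - 1)) *
            ∑ j ∈ Finset.univ.erase i, Sfun g x j k (Finset.univ.erase i)) *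
        (deriv (fun t => p t (x i)) θ / p θ (x i)))
      = (∑ i, (∏ j, p θ (x j)) * Sfun g x i k Finset.univ *
            (deriv (fun t => p t (x i)) θ / p θ (x i)))
        - ∑ i, (∏ j, p θ (x j)) *
            ((1 / ((n : ℝ) - 1)) *
              ∑ j ∈ Finset.univ.erase i, Sfun g x j k (Finset.univ.erase i)) *
            (deriv (fun t => p t (x i)) θ / p θ (x i)) := by
    intro x
    rw [Finset.mul_sum, ← Finset.sum_sub_distrib]
    exact Finset.sum_congr rfl fun i _ => by ring
  rw [Finset.sum_congr rfl fun x _ => expand x, Finset.sum_sub_distrib]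
  have hbase : ∑ x : Fin n → X, ∑ i, (∏ j, p θ (x j)) *
      ((1 / ((n : ℝ) - 1)) *
        ∑ j ∈ Finset.univ.erase i, Sfun g x j k (Finset.univ.erase i)) *
      (deriv (fun t => p t (x i)) θ / p θ (x i)) = 0 := by
    rw [Finset.sum_comm]
    refine Finset.sum_eq_zero fun i _ => ?_
    refine vanish p hpos hsum hdiff θ i _ ?_
    intro x y hxy
    congr 1
    refine Finset.sum_congr rfl fun j hj => ?_
    exact Sfun_congr g j k (Finset.univ.erase i)
      (fun b hb => hxy b (Finset.mem_erase.1 hb).1)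
  rw [hbase, sub_zero]
  -- main term
  have hSterm : ∀ (x : Fin n → X) (i : Fin n),
      (∏ j, p θ (x j)) * Sfun g x i k Finset.univ *
        (deriv (fun t => p t (x i)) θ / p θ (x i))
      = (1 / (n.choose k : ℝ)) * ∑ I ∈ PS.filter (fun I => i ∈ I),
          (∏ j, p θ (x j)) * finsetMax I (fun b => g (x b)) *
            (deriv (fun t => p t (x i)) θ / p θ (x i)) := by
    intro x i
    unfold Sfun
    rw [Finset.card_univ, Fintype.card_fin]
    simp only [Finset.mul_sum, Finset.sum_mul, hPS]
    exact Finset.sum_congr rfl fun I _ => by ring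
  rw [Finset.sum_comm]
  rw [Finset.sum_congr rfl fun i _ => Finset.sum_congr rfl fun x _ => hSterm x i]
  simp_rw [← Finset.mul_sum]
  congr 1
  have hswap : ∀ i : Fin n, ∑ x : Fin n → X, ∑ I ∈ PS.filter (fun I => i ∈ I),
      (∏ j, p θ (x j)) * finsetMax I (fun b => g (x b)) *
        (deriv (fun t => p t (x i)) θ / p θ (x i))
      = ∑ I ∈ PS.filter (fun I => i ∈ I), T I i := by
    intro i
    rw [Finset.sum_comm]
  rw [Finset.sum_congr rfl fun i _ => hswap i]
  have h1 : ∀ i : Fin n, ∑ I ∈ PS.filter (fun I => i ∈ I), T I i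
      = ∑ I ∈ PS, if i ∈ I then T I i else 0 := fun i => Finset.sum_filter _ _
  rw [Finset.sum_congr rfl fun i _ => h1 i, Finset.sum_comm]
  refine Finset.sum_congr rfl fun I _ => Finset.sum_congr rfl fun i _ => ?_
  by_cases hiI : i ∈ I
  · rw [if_pos hiI]
  · rw [if_neg hiI, hT0 I i hiI]
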